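/- Let M be a cancellative atomic monoid such that the left divisibility order ≤_L is a partial order in which any two elements with a common upper bound have a least upper bound (and in particular, for a, b ≤_L Δ the join a ∨_L b exists). Let Δ ∈ M satisfy L(Δ) = R(Δ), where L(Δ) = {x ∈ M : x ≤_L Δ} and R(Δ) = {x ∈ M : x ≤_R Δ}. Then L(Δ) is closed under left complement: for all a, b ∈ L(Δ), the unique element a∖b ∈ M satisfying a · (a∖b) = a ∨_L b belongs to L(Δ). -/
import Mathlib


/-- Left divisibility in a monoid: `a ≤_L b`. -/
def leftDvd {M : Type*} [Monoid M] (a b : M) : Prop := ∃ c, a * c = b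

/-- Right divisibility in a monoid: `a ≤_R b`. -/
def rightDvd {M : Type*} [Monoid M] (a b : M) : Prop := ∃ c, c * a = b

/-- A monoid is atomic if it admits a norm `ν : M → ℕ`. -/
def IsAtomicMonoid (M : Type*) [Monoid M] : Prop :=
  ∃ ν : M → ℕ, (∀ a, ν a = 0 ↔ a = 1) ∧ ∀ a b, ν a + ν b ≤ ν (a * b)

/-- `j` is the least upper bound (join) of `a` and `b` for the left divisibility order. -/
def IsLeftJoin {M : Type*} [Monoid M] (a b j : M) : Prop :=
  leftDvd a j ∧ leftDvd b j ∧ ∀ z, leftDvd a z → leftDvd b z → leftDvd j z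

theorem garside_divisors_closed_under_left_complement {M : Type} [Monoid M]
    (hlc : ∀ a b c : M, a * b = a * c → b = c)
    (hrc : ∀ a b c : M, b * a = c * a → b = c)
    (hat : IsAtomicMonoid M)
    (hpo : ∀ a b : M, leftDvd a b → leftDvd b a → a = b)
    (hql : ∀ a b : M, (∃ z, leftDvd a z ∧ leftDvd b z) → ∃ j, IsLeftJoin a b j)
    (Δ : M) (hLR : {x : M | leftDvd x Δ} = {x : M | rightDvd x Δ}) :
    ∀ a b : M, leftDvd a Δ → leftDvd b Δ →
      ∀ j : M, IsLeftJoin a b j → ∀ c : M, a * c = j → leftDvd c Δ := by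
  intro a b ha hb j hj c hc
  obtain ⟨d, hd⟩ := hj.2.2 Δ ha hb
  have h1 : c * d ∈ {x : M | rightDvd x Δ} := ⟨a, by rw [← mul_assoc, hc, hd]⟩
  rw [← hLR] at h1
  obtain ⟨e, he⟩ := h1
  exact ⟨d * e, by rw [← mul_assoc, he]⟩
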